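/- Let V be a finite dimensional real vector space with closed proper convex cone γ of non-empty interior, and let v ∈ Int(−γ). Suppose S ⊆ Int(−γ) satisfies S + Int(−γ) ⊆ S and c·v ∈ S for all c > 0. Then S = Int(−γ). -/

import Mathlib

open Pointwise

/-- If `S ⊆ Int(-γ)` satisfies `S + Int(-γ) ⊆ S` and contains `c•v` for all `c > 0`
(where `v ∈ Int(-γ)`), then `S = Int(-γ)`. -/
theorem stmt17 {V : Type*} [NormedAddCommGroup V] [NormedSpace ℝ V] [FiniteDimensional ℝ V]
    (γ : Set V) (h0 : (0 : V) ∈ γ) (hsmul : ∀ c : ℝ, 0 < c → c • γ ⊆ γ)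
    (hconv : Convex ℝ γ) (hcl : IsClosed γ) (hproper : γ ∩ (-γ) = {0})
    (hint : (interior γ).Nonempty)
    (v : V) (hv : v ∈ interior (-γ))
    (S : Set V) (hS : S ⊆ interior (-γ))
    (hSadd : S + interior (-γ) ⊆ S)
    (hSv : ∀ c : ℝ, 0 < c → c • v ∈ S) :
    S = interior (-γ) := by
  apply Set.Subset.antisymm hS
  intro x hx
  have hcont : ContinuousAt (fun c : ℝ => x - c • v) 0 := by fun_prop
  have hev : ∀ᶠ c in nhds (0:ℝ), x - c • v ∈ interior (-γ) := by
    have := hcont.eventually ((isOpen_interior : IsOpen (interior (-γ))).mem_nhds (by simpa using hx))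
    exact this
  have h2 : ∀ᶠ c in nhdsWithin (0:ℝ) (Set.Ioi 0), x - c • v ∈ interior (-γ) :=
    hev.filter_mono nhdsWithin_le_nhds
  obtain ⟨c, hcmem, hc⟩ := (h2.and eventually_mem_nhdsWithin).exists
  have : c • v + (x - c • v) ∈ S :=
    hSadd (Set.add_mem_add (hSv c hc) hcmem)
  simpa using this
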